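/- arXiv:0804.4195 — 6 statements merged into one kernel-verified Lean document; each statement's English description precedes it below -/
import Mathlib

section
/- Let t ≥ 2 be an integer, P > 0, h, g ∈ ℂ^t, and let e₁ be a unit-norm generalized eigenvector of the pencil (I + P h h*, I + P g g*) with eigenvalue λ₁, and assume λ₁ ≥ 1. Define γ₁(α) = (1 + αP|h* e₁|²)/(1 + αP|g* e₁|²) for α ∈ [0,1]. Then γ₁(α) ≤ λ₁ for every α ∈ [0,1], and γ₁(1) = λ₁. Consequently the maximum over α ∈ [0,1] of log₂ γ₁(α) equals log₂ λ₁ and is attained at α = 1 (Corollary 1: the maximum secrecy rate of user 1 is R₁,max = log₂ λ₁). -/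
open scoped InnerProductSpace

/-- `γ₁(α) = (1 + αP|h* e₁|²)/(1 + αP|g* e₁|²)`. -/
noncomputable def gamma1 (t : ℕ) (P : ℝ) (h g e1 : EuclideanSpace ℂ (Fin t)) (α : ℝ) : ℝ :=
  (1 + α * P * ‖⟪h, e1⟫_ℂ‖ ^ 2) / (1 + α * P * ‖⟪g, e1⟫_ℂ‖ ^ 2)

/-- Corollary 1: if `e₁` is a unit-norm generalized eigenvector of the pencil
`(I + P h h*, I + P g g*)` with eigenvalue `λ₁ ≥ 1`, then `γ₁(α) ≤ λ₁` for every
`α ∈ [0,1]` and `γ₁(1) = λ₁`; consequently the maximum over `α ∈ [0,1]` of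
`log₂ γ₁(α)` equals `log₂ λ₁` and is attained at `α = 1`
(`R₁,max = log₂ λ₁`). -/
theorem stmt_3 (t : ℕ) (ht : 2 ≤ t) (P : ℝ) (hP : 0 < P)
    (h g e1 : EuclideanSpace ℂ (Fin t)) (lam1 : ℝ)
    (he1 : ‖e1‖ = 1)
    (heig : e1 + ((P : ℂ) * ⟪h, e1⟫_ℂ) • h = (lam1 : ℂ) • (e1 + ((P : ℂ) * ⟪g, e1⟫_ℂ) • g))
    (hlam : 1 ≤ lam1) :
    (∀ α ∈ Set.Icc (0 : ℝ) 1, gamma1 t P h g e1 α ≤ lam1) ∧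
    gamma1 t P h g e1 1 = lam1 ∧
    (∀ α ∈ Set.Icc (0 : ℝ) 1,
      Real.logb 2 (gamma1 t P h g e1 α) ≤ Real.logb 2 lam1) ∧
    Real.logb 2 (gamma1 t P h g e1 1) = Real.logb 2 lam1 := by
  set A : ℝ := P * ‖⟪h, e1⟫_ℂ‖ ^ 2 with hA
  set B : ℝ := P * ‖⟪g, e1⟫_ℂ‖ ^ 2 with hB
  have hAnn : 0 ≤ A := by positivity
  have hBnn : 0 ≤ B := by positivity
  -- take inner product with e1
  have hkey : (1 : ℂ) + A = lam1 * (1 + B) := by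
    have := congrArg (fun v => ⟪e1, v⟫_ℂ) heig
    simp only [inner_add_right, inner_smul_right] at this
    have he : ⟪e1, e1⟫_ℂ = 1 := by
      rw [inner_self_eq_norm_sq_to_K, he1]; norm_num
    have hh : ⟪h, e1⟫_ℂ * ⟪e1, h⟫_ℂ = (‖⟪h, e1⟫_ℂ‖ : ℂ) ^ 2 := by
      rw [← inner_conj_symm e1 h, Complex.mul_conj']
    have hg : ⟪g, e1⟫_ℂ * ⟪e1, g⟫_ℂ = (‖⟪g, e1⟫_ℂ‖ : ℂ) ^ 2 := by
      rw [← inner_conj_symm e1 g, Complex.mul_conj']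
    rw [he] at this
    rw [hA, hB]
    push_cast
    rw [mul_add, mul_one]
    calc (1 : ℂ) + ↑P * (‖⟪h, e1⟫_ℂ‖ : ℂ) ^ 2
        = 1 + ↑P * ⟪h, e1⟫_ℂ * ⟪e1, h⟫_ℂ := by rw [mul_assoc, hh]
      _ = ↑lam1 * (1 + ↑P * ⟪g, e1⟫_ℂ * ⟪e1, g⟫_ℂ) := this
      _ = ↑lam1 + ↑lam1 * (↑P * (‖⟪g, e1⟫_ℂ‖ : ℂ) ^ 2) := by
          rw [mul_assoc (↑P : ℂ), hg]; ring
  have hkeyR : 1 + A = lam1 * (1 + B) := by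
    have := congrArg Complex.re hkey
    simpa using this
  have hle : ∀ α ∈ Set.Icc (0 : ℝ) 1, gamma1 t P h g e1 α ≤ lam1 := by
    intro α hα
    obtain ⟨hα0, hα1⟩ := hα
    have hden : 0 < 1 + α * B := by positivity
    rw [gamma1,
        show (1:ℝ) + α * P * ‖⟪h, e1⟫_ℂ‖ ^ 2 = 1 + α * A by rw [hA]; ring,
        show (1:ℝ) + α * P * ‖⟪g, e1⟫_ℂ‖ ^ 2 = 1 + α * B by rw [hB]; ring,
        div_le_iff₀ hden]
    nlinarith [mul_nonneg hα0 hBnn]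
  have heq : gamma1 t P h g e1 1 = lam1 := by
    rw [gamma1]
    have hden : (0:ℝ) < 1 + 1 * P * ‖⟪g, e1⟫_ℂ‖ ^ 2 := by positivity
    rw [div_eq_iff (ne_of_gt hden)]
    rw [show (1:ℝ) + 1 * P * ‖⟪h, e1⟫_ℂ‖ ^ 2 = 1 + A by rw [hA]; ring,
        show (1:ℝ) + 1 * P * ‖⟪g, e1⟫_ℂ‖ ^ 2 = 1 + B by rw [hB]; ring]
    exact hkeyR
  refine ⟨hle, heq, ?_, by rw [heq]⟩
  intro α hα
  have hpos : 0 < gamma1 t P h g e1 α := by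
    obtain ⟨hα0, hα1⟩ := hα
    rw [gamma1]
    positivity
  exact Real.logb_le_logb_of_le (by norm_num) hpos (hle α hα)
end

section
/- Let t ≥ 2 be an integer, P > 0, h, g ∈ ℂ^t, and let e₂ be a unit-norm generalized eigenvector of the pencil (I + P g g*, I + P h h*) with eigenvalue λ₂, and assume λ₂ ≥ 1. Define ξ₂(β) = (1 + βP|g* e₂|²)/(1 + βP|h* e₂|²) for β ∈ [0,1]. Then ξ₂(β) ≤ λ₂ for every β ∈ [0,1], and ξ₂(1) = λ₂. Consequently the maximum over β ∈ [0,1] of log₂ ξ₂(β) equals log₂ λ₂ and is attained at β = 1 (Corollary 3: the maximum secrecy rate of user 2 is R₂,max = log₂ λ₂). -/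
open scoped InnerProductSpace

/-- `ξ₂(β) = (1 + βP|g* e₂|²)/(1 + βP|h* e₂|²)`. -/
noncomputable def xi2 (t : ℕ) (P : ℝ) (h g e2 : EuclideanSpace ℂ (Fin t)) (β : ℝ) : ℝ :=
  (1 + β * P * ‖⟪g, e2⟫_ℂ‖ ^ 2) / (1 + β * P * ‖⟪h, e2⟫_ℂ‖ ^ 2)

/-- Corollary 3: if `e₂` is a unit-norm generalized eigenvector of the pencil
`(I + P g g*, I + P h h*)` with eigenvalue `λ₂ ≥ 1`, then `ξ₂(β) ≤ λ₂` for every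
`β ∈ [0,1]` and `ξ₂(1) = λ₂`; consequently the maximum over `β ∈ [0,1]` of
`log₂ ξ₂(β)` equals `log₂ λ₂` and is attained at `β = 1`
(`R₂,max = log₂ λ₂`). -/
theorem stmt_4 (t : ℕ) (ht : 2 ≤ t) (P : ℝ) (hP : 0 < P)
    (h g e2 : EuclideanSpace ℂ (Fin t)) (lam2 : ℝ)
    (he2 : ‖e2‖ = 1)
    (heig : e2 + ((P : ℂ) * ⟪g, e2⟫_ℂ) • g = (lam2 : ℂ) • (e2 + ((P : ℂ) * ⟪h, e2⟫_ℂ) • h))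
    (hlam : 1 ≤ lam2) :
    (∀ β ∈ Set.Icc (0 : ℝ) 1, xi2 t P h g e2 β ≤ lam2) ∧
    xi2 t P h g e2 1 = lam2 ∧
    (∀ β ∈ Set.Icc (0 : ℝ) 1,
      Real.logb 2 (xi2 t P h g e2 β) ≤ Real.logb 2 lam2) ∧
    Real.logb 2 (xi2 t P h g e2 1) = Real.logb 2 lam2 := by
  set G : ℝ := ‖⟪g, e2⟫_ℂ‖ ^ 2 with hG
  set H : ℝ := ‖⟪h, e2⟫_ℂ‖ ^ 2 with hH
  have hGnn : 0 ≤ G := by positivity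
  have hHnn : 0 ≤ H := by positivity
  -- key identity: 1 + P G = lam2 (1 + P H)
  have key : (1 : ℝ) + P * G = lam2 * (1 + P * H) := by
    have h1 := congrArg (fun v => ⟪e2, v⟫_ℂ) heig
    simp only [inner_add_right, inner_smul_right] at h1
    have hself : ⟪e2, e2⟫_ℂ = 1 := by
      rw [inner_self_eq_norm_sq_to_K, he2]; norm_num
    have hg' : ⟪e2, g⟫_ℂ = starRingEnd ℂ ⟪g, e2⟫_ℂ := (inner_conj_symm e2 g).symm
    have hh' : ⟪e2, h⟫_ℂ = starRingEnd ℂ ⟪h, e2⟫_ℂ := (inner_conj_symm e2 h).symm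
    rw [hself, hg', hh'] at h1
    have hmulg : ⟪g, e2⟫_ℂ * starRingEnd ℂ ⟪g, e2⟫_ℂ = (G : ℂ) := by
      rw [Complex.mul_conj, hG]
      norm_cast
      rw [Complex.normSq_eq_norm_sq]
    have hmulh : ⟪h, e2⟫_ℂ * starRingEnd ℂ ⟪h, e2⟫_ℂ = (H : ℂ) := by
      rw [Complex.mul_conj, hH]
      norm_cast
      rw [Complex.normSq_eq_norm_sq]
    have h2 : (1 : ℂ) + P * G = lam2 * (1 + P * H) := by
      rw [← hmulg, ← hmulh]
      convert h1 using 1 <;> ring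
    exact_mod_cast h2
  have hden : ∀ β ∈ Set.Icc (0 : ℝ) 1, 0 < 1 + β * P * H := by
    intro β hβ
    nlinarith [mul_nonneg (mul_nonneg hβ.1 hP.le) hHnn]
  have hle : ∀ β ∈ Set.Icc (0 : ℝ) 1, xi2 t P h g e2 β ≤ lam2 := by
    intro β hβ
    rw [xi2, ← hG, ← hH, div_le_iff₀ (hden β hβ)]
    nlinarith [mul_nonneg (sub_nonneg.2 hβ.2) (sub_nonneg.2 hlam),
      mul_nonneg (mul_nonneg hβ.1 hP.le) hHnn, hβ.1, hβ.2,
      mul_nonneg (mul_nonneg (mul_nonneg hβ.1 hP.le) hHnn) (sub_nonneg.2 hlam)]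
  have heq : xi2 t P h g e2 1 = lam2 := by
    have hd : (0:ℝ) < 1 + P * H := by nlinarith
    rw [xi2, ← hG, ← hH, one_mul, key, mul_div_assoc, div_self hd.ne', mul_one]
  have hxpos : ∀ β ∈ Set.Icc (0 : ℝ) 1, 0 < xi2 t P h g e2 β := by
    intro β hβ
    rw [xi2, ← hG, ← hH]
    have := hden β hβ
    have : (0:ℝ) < 1 + β * P * G := by
      nlinarith [mul_nonneg (mul_nonneg hβ.1 hP.le) hGnn]
    positivity
  refine ⟨hle, heq, fun β hβ => ?_, by rw [heq]⟩
  have hb : (1:ℝ) < 2 := one_lt_two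
  calc Real.logb 2 (xi2 t P h g e2 β) ≤ Real.logb 2 lam2 := by
        gcongr
        · exact hxpos β hβ
        · exact hle β hβ
end

section
/- Let t ≥ 1 be an integer, P > 0, h, g ∈ ℂ^t, and let e₁ be a unit-norm generalized eigenvector of the pencil (I + P h h*, I + P g g*) with eigenvalue λ₁. Define γ₁(α) = (1 + αP|h* e₁|²)/(1 + αP|g* e₁|²). If λ₁ ≥ 1 then γ₁(α) ≥ 1 for every α ∈ [0,1]; if λ₁ > 1 then γ₁(α) > 1 for every α ∈ (0,1]. In particular, under the condition λ₁ > 1 the secrecy rate bound log₂ γ₁(α) of the secret dirty-paper coding region is strictly positive for all α ∈ (0,1]. -/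
open scoped InnerProductSpace

/-- If `e₁` is a unit-norm generalized eigenvector of the pencil
`(I + P h h*, I + P g g*)` with eigenvalue `λ₁`, then `λ₁ ≥ 1` implies `γ₁(α) ≥ 1`
for every `α ∈ [0,1]`, and `λ₁ > 1` implies `γ₁(α) > 1` for every `α ∈ (0,1]`;
in particular, when `λ₁ > 1` the secrecy rate bound `log₂ γ₁(α)` of the secret
dirty-paper coding region is strictly positive for all `α ∈ (0,1]`. -/
theorem stmt_6 (t : ℕ) (ht : 1 ≤ t) (P : ℝ) (hP : 0 < P)
    (h g e1 : EuclideanSpace ℂ (Fin t)) (lam1 : ℝ)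
    (he1 : ‖e1‖ = 1)
    (heig : e1 + ((P : ℂ) * ⟪h, e1⟫_ℂ) • h = (lam1 : ℂ) • (e1 + ((P : ℂ) * ⟪g, e1⟫_ℂ) • g)) :
    (1 ≤ lam1 → ∀ α ∈ Set.Icc (0 : ℝ) 1, 1 ≤ gamma1 t P h g e1 α) ∧
    (1 < lam1 → ∀ α ∈ Set.Ioc (0 : ℝ) 1,
      1 < gamma1 t P h g e1 α ∧ 0 < Real.logb 2 (gamma1 t P h g e1 α)) := by
  set A : ℝ := ‖⟪h, e1⟫_ℂ‖ ^ 2 with hA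
  set B : ℝ := ‖⟪g, e1⟫_ℂ‖ ^ 2 with hB
  have hA0 : 0 ≤ A := sq_nonneg _
  have hB0 : 0 ≤ B := sq_nonneg _
  have key : 1 + P * A = lam1 * (1 + P * B) := by
    have h1 := congrArg (fun v => ⟪e1, v⟫_ℂ) heig
    simp only [inner_add_right, inner_smul_right] at h1
    have he : ⟪e1, e1⟫_ℂ = 1 := by
      rw [inner_self_eq_norm_sq_to_K, he1]; norm_num
    have hh : ⟪e1, h⟫_ℂ = starRingEnd ℂ ⟪h, e1⟫_ℂ := (inner_conj_symm _ _).symm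
    have hg : ⟪e1, g⟫_ℂ = starRingEnd ℂ ⟪g, e1⟫_ℂ := (inner_conj_symm _ _).symm
    have hAc : ⟪h, e1⟫_ℂ * starRingEnd ℂ ⟪h, e1⟫_ℂ = (A : ℂ) := by
      rw [Complex.mul_conj']
      norm_cast
    have hBc : ⟪g, e1⟫_ℂ * starRingEnd ℂ ⟪g, e1⟫_ℂ = (B : ℂ) := by
      rw [Complex.mul_conj']
      norm_cast
    rw [he, hh, hg] at h1
    have h2 : (1 : ℂ) + (P : ℂ) * (A : ℂ) = (lam1 : ℂ) * (1 + (P : ℂ) * (B : ℂ)) := by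
      rw [← hAc, ← hBc]; ring_nf; ring_nf at h1; linear_combination h1
    exact_mod_cast h2
  -- main comparison: under 1 ≤ lam1, B ≤ A
  have hBA : 1 ≤ lam1 → B ≤ A := by
    intro hl
    have h1 : 1 + P * B ≤ 1 + P * A := by
      rw [key]
      nlinarith [mul_nonneg hP.le hB0]
    nlinarith
  have hBA' : 1 < lam1 → B < A := by
    intro hl
    have h1 : 1 + P * B < 1 + P * A := by
      rw [key]
      nlinarith [mul_nonneg hP.le hB0]
    nlinarith
  constructor
  · intro hl α hα
    obtain ⟨hα0, hα1⟩ := hα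
    have hden : 0 < 1 + α * P * B := by nlinarith [mul_nonneg hα0 hP.le]
    rw [gamma1, le_div_iff₀ hden]
    nlinarith [hBA hl, mul_nonneg hα0 hP.le]
  · intro hl α hα
    obtain ⟨hα0, hα1⟩ := hα
    have hden : 0 < 1 + α * P * B := by nlinarith [mul_nonneg hα0.le hP.le]
    have hγ : 1 < gamma1 t P h g e1 α := by
      rw [gamma1, lt_div_iff₀ hden]
      nlinarith [hBA' hl, mul_pos hα0 hP]
    exact ⟨hγ, Real.logb_pos one_lt_two hγ⟩
end

section
/- Let t ≥ 1 be an integer, P > 0, h, g ∈ ℂ^t, α ∈ [0,1], and let e₁ ∈ ℂ^t be any unit vector. Set s = (1−α)P/(1 + αP|g* e₁|²) and r = (1−α)P/(1 + αP|h* e₁|²), and let c₂ ∈ ℂ^t be a unit vector with (I + s g g*) c₂ = γ₂ (I + r h h*) c₂ for some real γ₂. Define the covariance matrices K₁ = αP e₁ e₁* and K₂ = (1−α)P c₂ c₂*. Then: (i) tr(K₁ + K₂) = P; (ii) (1 + h* K₁ h)/(1 + g* K₁ g) = (1 + αP|h* e₁|²)/(1 + αP|g* e₁|²); and (iii) the secret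 dirty-paper coding rate expression satisfies [1 + g*(K₁+K₂)g]·[1 + h* K₁ h] / ( [1 + h*(K₁+K₂)h]·[1 + g* K₁ g] ) = γ₂. -/
open Matrix

lemma aux_mulVec {t : ℕ} (u v x : Fin t → ℂ) :
    (vecMulVec u v).mulVec x = (v ⬝ᵥ x) • u := by
  ext i; simp [vecMulVec, mulVec, dotProduct, Finset.mul_sum, mul_comm, mul_assoc, mul_left_comm]

lemma aux_trace {t : ℕ} (u v : Fin t → ℂ) : (vecMulVec u v).trace = u ⬝ᵥ v := by
  simp [trace, vecMulVec, dotProduct]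

lemma aux_quad {t : ℕ} (u x : Fin t → ℂ) (c : ℝ) :
    star x ⬝ᵥ (((c : ℂ) • vecMulVec u (star u)).mulVec x)
      = ((c * ‖star x ⬝ᵥ u‖ ^ 2 : ℝ) : ℂ) := by
  rw [smul_mulVec, aux_mulVec, dotProduct_smul, dotProduct_smul]
  rw [show star u ⬝ᵥ x = star (star x ⬝ᵥ u) from star_dotProduct _ _]
  have : star (star x ⬝ᵥ u) * (star x ⬝ᵥ u) = ((‖star x ⬝ᵥ u‖ ^ 2 : ℝ) : ℂ) := by
    rw [mul_comm]
    push_cast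
    exact Complex.mul_conj' _
  simp only [smul_eq_mul, mul_assoc, this]
  push_cast; ring

/-- Properties of the covariance matrix choice for the secret dirty-paper coding
scheme: with `K₁ = αP e₁ e₁*` and `K₂ = (1−α)P c₂ c₂*`, where `e₁` is a unit
vector and `c₂` is a unit generalized eigenvector of the pencil
`(I + s g g*, I + r h h*)` with eigenvalue `γ₂`, `s = (1−α)P/(1+αP|g*e₁|²)` and
`r = (1−α)P/(1+αP|h*e₁|²)`:
(i) `tr(K₁+K₂) = P`;
(ii) `(1 + h* K₁ h)/(1 + g* K₁ g) = (1 + αP|h* e₁|²)/(1 + αP|g* e₁|²)`;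
(iii) `[1 + g*(K₁+K₂)g][1 + h* K₁ h] / ([1 + h*(K₁+K₂)h][1 + g* K₁ g]) = γ₂`. -/
theorem stmt_8 (t : ℕ) (ht : 1 ≤ t) (P : ℝ) (hP : 0 < P)
    (α : ℝ) (hα : α ∈ Set.Icc (0 : ℝ) 1)
    (h g e1 c2 : Fin t → ℂ) (γ2 : ℝ)
    (he1 : star e1 ⬝ᵥ e1 = 1) (hc2 : star c2 ⬝ᵥ c2 = 1)
    (s r : ℝ)
    (hs : s = (1 - α) * P / (1 + α * P * ‖star g ⬝ᵥ e1‖ ^ 2))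
    (hr : r = (1 - α) * P / (1 + α * P * ‖star h ⬝ᵥ e1‖ ^ 2))
    (heig : c2 + ((s : ℂ) * (star g ⬝ᵥ c2)) • g
      = (γ2 : ℂ) • (c2 + ((r : ℂ) * (star h ⬝ᵥ c2)) • h))
    (K1 K2 : Matrix (Fin t) (Fin t) ℂ)
    (hK1 : K1 = ((α * P : ℝ) : ℂ) • vecMulVec e1 (star e1))
    (hK2 : K2 = (((1 - α) * P : ℝ) : ℂ) • vecMulVec c2 (star c2)) :
    (K1 + K2).trace = (P : ℂ) ∧
    (1 + star h ⬝ᵥ K1.mulVec h) / (1 + star g ⬝ᵥ K1.mulVec g)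
      = (((1 + α * P * ‖star h ⬝ᵥ e1‖ ^ 2) / (1 + α * P * ‖star g ⬝ᵥ e1‖ ^ 2) : ℝ) : ℂ) ∧
    ((1 + star g ⬝ᵥ (K1 + K2).mulVec g) * (1 + star h ⬝ᵥ K1.mulVec h)) /
      ((1 + star h ⬝ᵥ (K1 + K2).mulVec h) * (1 + star g ⬝ᵥ K1.mulVec g)) = (γ2 : ℂ) := by
  obtain ⟨hα0, hα1⟩ := hα
  set A := ‖star g ⬝ᵥ e1‖ ^ 2 with hA
  set B := ‖star h ⬝ᵥ e1‖ ^ 2 with hB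
  set G := ‖star g ⬝ᵥ c2‖ ^ 2 with hG
  set H := ‖star h ⬝ᵥ c2‖ ^ 2 with hH
  have hA0 : 0 ≤ A := sq_nonneg _
  have hB0 : 0 ≤ B := sq_nonneg _
  have hG0 : 0 ≤ G := sq_nonneg _
  have hH0 : 0 ≤ H := sq_nonneg _
  have hap : 0 ≤ α * P := mul_nonneg hα0 hP.le
  have hDA : 0 < 1 + α * P * A := by positivity
  have hDB : 0 < 1 + α * P * B := by positivity
  -- quadratic forms
  have q1h : star h ⬝ᵥ K1.mulVec h = ((α * P * B : ℝ) : ℂ) := by rw [hK1]; exact aux_quad _ _ _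
  have q1g : star g ⬝ᵥ K1.mulVec g = ((α * P * A : ℝ) : ℂ) := by rw [hK1]; exact aux_quad _ _ _
  have q2h : star h ⬝ᵥ K2.mulVec h = (((1 - α) * P * H : ℝ) : ℂ) := by
    rw [hK2]; exact aux_quad _ _ _
  have q2g : star g ⬝ᵥ K2.mulVec g = (((1 - α) * P * G : ℝ) : ℂ) := by
    rw [hK2]; exact aux_quad _ _ _
  -- eigen relation
  have key : 1 + s * G = γ2 * (1 + r * H) := by
    have := congrArg (fun v => star c2 ⬝ᵥ v) heig
    simp only [dotProduct_add, dotProduct_smul, hc2, smul_eq_mul] at this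
    have hge : star c2 ⬝ᵥ g = star (star g ⬝ᵥ c2) := star_dotProduct _ _
    have hhe : star c2 ⬝ᵥ h = star (star h ⬝ᵥ c2) := star_dotProduct _ _
    rw [hge, hhe] at this
    have e1 : (star g ⬝ᵥ c2) * star (star g ⬝ᵥ c2) = ((G : ℝ) : ℂ) := by
      rw [hG]; push_cast; exact Complex.mul_conj' _
    have e2 : (star h ⬝ᵥ c2) * star (star h ⬝ᵥ c2) = ((H : ℝ) : ℂ) := by
      rw [hH]; push_cast; exact Complex.mul_conj' _
    have : ((1 + s * G : ℝ) : ℂ) = ((γ2 * (1 + r * H) : ℝ) : ℂ) := by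
      push_cast
      rw [← e1, ← e2]
      linear_combination this
    exact_mod_cast this
  refine ⟨?_, ?_, ?_⟩
  · rw [hK1, hK2, trace_add, trace_smul, trace_smul, aux_trace, aux_trace]
    rw [dotProduct_comm e1, dotProduct_comm c2, he1, hc2]
    simp only [smul_eq_mul, mul_one]
    push_cast; ring
  · rw [q1h, q1g]
    push_cast; ring
  · simp only [add_mulVec, dotProduct_add]
    rw [q1h, q1g, q2h, q2g]
    have hnum : ((1:ℂ) + ((α * P * A : ℝ) : ℂ) + (((1 - α) * P * G : ℝ) : ℂ))
        * (1 + ((α * P * B : ℝ) : ℂ))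
        = (((1 + α * P * A + (1 - α) * P * G) * (1 + α * P * B) : ℝ) : ℂ) := by
      push_cast; ring
    have hden : ((1:ℂ) + ((α * P * B : ℝ) : ℂ) + (((1 - α) * P * H : ℝ) : ℂ))
        * (1 + ((α * P * A : ℝ) : ℂ))
        = (((1 + α * P * B + (1 - α) * P * H) * (1 + α * P * A) : ℝ) : ℂ) := by
      push_cast; ring
    rw [show (1:ℂ) + (((α * P * A : ℝ) : ℂ) + (((1 - α) * P * G : ℝ) : ℂ))
        = (1:ℂ) + ((α * P * A : ℝ) : ℂ) + (((1 - α) * P * G : ℝ) : ℂ) by ring,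
      show (1:ℂ) + (((α * P * B : ℝ) : ℂ) + (((1 - α) * P * H : ℝ) : ℂ))
        = (1:ℂ) + ((α * P * B : ℝ) : ℂ) + (((1 - α) * P * H : ℝ) : ℂ) by ring,
      hnum, hden, ← Complex.ofReal_div]
    congr 1
    -- real computation
    have hr0 : 0 ≤ r := by
      rw [hr]; exact div_nonneg (mul_nonneg (by linarith) hP.le) hDB.le
    have hDH : 0 < 1 + r * H := by positivity
    have hfac1 : 1 + α * P * A + (1 - α) * P * G = (1 + α * P * A) * (1 + s * G) := by
      rw [hs]; field_simp
    have hfac2 : 1 + α * P * B + (1 - α) * P * H = (1 + α * P * B) * (1 + r * H) := by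
      rw [hr]; field_simp
    rw [hfac1, hfac2, key]
    field_simp
end

section
/- Let t ≥ 1 be an integer, P > 0, h, g ∈ ℂ^t, and let e₁ be a unit-norm generalized eigenvector of the pencil (I + P h h*, I + P g g*) with eigenvalue λ₁, and assume h* e₁ ≠ 0. Set ρ = (g* e₁)/(h* e₁) and K = P e₁ e₁*. Then the minimum over ν ∈ ℂ of the outer-bound objective (h − νg)* K (h − νg) + 1 + |ν|² − ν̄ρ − ρ̄ν equals λ₁ (1 − |ρ|²). Consequently, when |ρ| < 1, the Sato-type outer-bound rate f₁(ρ, K) = min over ν ∈ ℂ of log₂ [ ((h − νg)* K (h − νg) + 1 + |ν|² − ν̄ρ − ρ̄ν)/(1 − |ρ|²) ] equals log₂ λ₁, matching the corner point R₁,max = log₂ λ₁ of the secret dirty-paper coding region. -/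
open scoped InnerProductSpace ComplexConjugate

lemma keyId (P lam1 : ℝ) (A ρ ν : ℂ)
    (hk : 1 + P * ‖A‖ ^ 2 = lam1 * (1 + P * ‖ρ * A‖ ^ 2)) :
    P * ‖conj A - ν * conj (ρ * A)‖ ^ 2 + 1 + ‖ν‖ ^ 2 - 2 * (conj ν * ρ).re
      = lam1 * (1 - ‖ρ‖ ^ 2) + (1 + P * ‖ρ * A‖ ^ 2) * ‖ν - (lam1 : ℂ) * ρ‖ ^ 2 := by
  simp only [Complex.sq_norm, Complex.normSq_apply, Complex.mul_re,
    Complex.mul_im, Complex.sub_re, Complex.sub_im, Complex.conj_re, Complex.conj_im,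
    Complex.ofReal_re, Complex.ofReal_im] at hk ⊢
  linear_combination (1 + lam1 * (ρ.re^2 + ρ.im^2) - 2 * (ν.re * ρ.re + ν.im * ρ.im)) * hk

/-- The Sato-type outer-bound objective with input covariance `K = P e₁ e₁*`:
`F(ν) = (h − νg)* K (h − νg) + 1 + |ν|² − ν̄ρ − ρ̄ν
      = P·|e₁*(h − νg)|² + 1 + |ν|² − 2 Re(ν̄ ρ)`. -/
noncomputable def outerObj (t : ℕ) (P : ℝ) (h g e1 : EuclideanSpace ℂ (Fin t))
    (ρ ν : ℂ) : ℝ :=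
  P * ‖⟪e1, h - ν • g⟫_ℂ‖ ^ 2 + 1 + ‖ν‖ ^ 2 - 2 * (conj ν * ρ).re

/-- If `e₁` is a unit-norm generalized eigenvector of the pencil
`(I + P h h*, I + P g g*)` with eigenvalue `λ₁`, `h* e₁ ≠ 0`,
`ρ = (g* e₁)/(h* e₁)` and `K = P e₁ e₁*`, then the minimum over `ν ∈ ℂ` of the
outer-bound objective equals `λ₁(1 − |ρ|²)`; consequently, when `|ρ| < 1` the
Sato-type outer-bound rate `f₁(ρ, K) = min_ν log₂[F(ν)/(1 − |ρ|²)]` equals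
`log₂ λ₁`, matching the corner point `R₁,max = log₂ λ₁`. -/
theorem stmt_9 (t : ℕ) (ht : 1 ≤ t) (P : ℝ) (hP : 0 < P)
    (h g e1 : EuclideanSpace ℂ (Fin t)) (lam1 : ℝ)
    (he1 : ‖e1‖ = 1)
    (heig : e1 + ((P : ℂ) * ⟪h, e1⟫_ℂ) • h = (lam1 : ℂ) • (e1 + ((P : ℂ) * ⟪g, e1⟫_ℂ) • g))
    (hne : ⟪h, e1⟫_ℂ ≠ 0) (ρ : ℂ) (hρ : ρ = ⟪g, e1⟫_ℂ / ⟪h, e1⟫_ℂ) :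
    IsLeast {y : ℝ | ∃ ν : ℂ, y = outerObj t P h g e1 ρ ν} (lam1 * (1 - ‖ρ‖ ^ 2)) ∧
    (‖ρ‖ < 1 →
      IsLeast {y : ℝ | ∃ ν : ℂ, y = Real.logb 2 (outerObj t P h g e1 ρ ν / (1 - ‖ρ‖ ^ 2))}
        (Real.logb 2 lam1)) := by
  set A := ⟪h, e1⟫_ℂ with hA
  set B := ⟪g, e1⟫_ℂ with hB
  have hBA : B = ρ * A := by rw [hρ]; field_simp
  have hk0 : 1 + P * ‖A‖ ^ 2 = lam1 * (1 + P * ‖B‖ ^ 2) := by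
    have h2 := congrArg (fun v : EuclideanSpace ℂ (Fin t) => (⟪e1, v⟫_ℂ)) heig
    simp only [inner_add_right, inner_smul_right, inner_self_eq_norm_sq_to_K, he1,
      ← inner_conj_symm e1 h, ← inner_conj_symm e1 g, mul_assoc, Complex.mul_conj,
      Complex.normSq_eq_norm_sq, ← hA, ← hB] at h2
    norm_num at h2
    exact_mod_cast h2
  have hk : 1 + P * ‖A‖ ^ 2 = lam1 * (1 + P * ‖ρ * A‖ ^ 2) := by rw [← hBA]; exact hk0
  have hF : ∀ ν : ℂ, outerObj t P h g e1 ρ ν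
      = lam1 * (1 - ‖ρ‖ ^ 2) + (1 + P * ‖ρ * A‖ ^ 2) * ‖ν - (lam1 : ℂ) * ρ‖ ^ 2 := by
    intro ν
    have hinner : ⟪e1, h - ν • g⟫_ℂ = conj A - ν * conj (ρ * A) := by
      rw [← hBA]
      simp only [inner_sub_right, inner_smul_right, ← inner_conj_symm e1 h,
        ← inner_conj_symm e1 g, hA, hB]
    rw [outerObj, hinner]
    exact keyId P lam1 A ρ ν hk
  have hcpos : 0 < 1 + P * ‖ρ * A‖ ^ 2 := by positivity
  have hlam : 0 < lam1 := by
    have h1 : 0 < 1 + P * ‖A‖ ^ 2 := by positivity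
    rw [hk] at h1
    nlinarith [hcpos]
  constructor
  · constructor
    · exact ⟨(lam1 : ℂ) * ρ, by rw [hF]; simp⟩
    · rintro y ⟨ν, rfl⟩
      rw [hF]
      nlinarith [sq_nonneg ‖ν - (lam1 : ℂ) * ρ‖, hcpos]
  · intro hr
    have hr2 : 0 < 1 - ‖ρ‖ ^ 2 := by nlinarith [norm_nonneg ρ]
    constructor
    · refine ⟨(lam1 : ℂ) * ρ, ?_⟩
      rw [hF]
      simp only [sub_self, norm_zero]
      rw [show (0:ℝ)^2 = 0 by norm_num, mul_zero, add_zero, mul_div_assoc,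
        div_self hr2.ne', mul_one]
    · rintro y ⟨ν, rfl⟩
      have h1 : lam1 ≤ outerObj t P h g e1 ρ ν / (1 - ‖ρ‖ ^ 2) := by
        rw [le_div_iff₀ hr2, hF ν]
        nlinarith [sq_nonneg ‖ν - (lam1 : ℂ) * ρ‖, hcpos]
      exact Real.logb_le_logb_of_le one_lt_two hlam h1
end

section
/- Let t ≥ 2 be an integer, P > 0, and suppose h, g ∈ ℂ^t are linearly independent. Let e₁ be a unit-norm generalized eigenvector of the pencil (I + P h h*, I + P g g*) with eigenvalue λ₁ equal to the largest generalized eigenvalue, define γ₁(α) = (1 + αP|h* e₁|²)/(1 + αP|g* e₁|²), and let γ₂(α) be the largest generalized eigenvalue of the pencil (I + ((1−α)P/(1 + αP|g* e₁|²)) g g*, I + ((1−α)P/(1 + αP|h* e₁|²)) h h*). Then for every α ∈ (0,1), both γ₁(α) > 1 and γ₂(α) > 1; hence both log₂ γ₁(α) > 0 and log₂ γ₂(α) > 0, i.e. both users can simultaneously achieve strictly positive secrecy rates. -/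
open scoped InnerProductSpace

/-- The set of generalized Rayleigh quotients of the pencil
`(I + s·v v*, I + r·w w*)` over nonzero `x ∈ ℂ^t`. -/
noncomputable def rayleighSet (t : ℕ) (s r : ℝ) (v w : EuclideanSpace ℂ (Fin t)) : Set ℝ :=
  {ρ : ℝ | ∃ x : EuclideanSpace ℂ (Fin t), x ≠ 0 ∧
    ρ = (‖x‖ ^ 2 + s * ‖⟪v, x⟫_ℂ‖ ^ 2) / (‖x‖ ^ 2 + r * ‖⟪w, x⟫_ℂ‖ ^ 2)}

lemma exists_perp {t : ℕ} (v w : EuclideanSpace ℂ (Fin t)) (hw : w ≠ 0)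
    (hnv : ∀ c : ℂ, v ≠ c • w) :
    ∃ x : EuclideanSpace ℂ (Fin t), x ≠ 0 ∧ ⟪w, x⟫_ℂ = 0 ∧ ⟪v, x⟫_ℂ ≠ 0 := by
  set c : ℂ := ⟪w, v⟫_ℂ / ((‖w‖ : ℂ))^2 with hc
  set x : EuclideanSpace ℂ (Fin t) := v - c • w with hxdef
  have hx0 : x ≠ 0 := by
    intro h0
    exact hnv c (by rwa [hxdef, sub_eq_zero] at h0)
  have hw2 : ((‖w‖ : ℂ))^2 ≠ 0 := by
    exact pow_ne_zero 2 (Complex.ofReal_ne_zero.mpr (norm_ne_zero_iff.mpr hw))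
  have hwx : ⟪w, x⟫_ℂ = 0 := by
    rw [hxdef, inner_sub_right, inner_smul_right, inner_self_eq_norm_sq_to_K, hc]
    field_simp
    simp [hw]
  refine ⟨x, hx0, hwx, ?_⟩
  have hvx : ⟪v, x⟫_ℂ = ⟪x, x⟫_ℂ := by
    rw [hxdef, inner_sub_left, inner_smul_left, hwx]
    simp [hxdef]
    rw [inner_sub_right, inner_smul_right, inner_self_eq_norm_sq_to_K]
    simp
  rw [hvx, inner_self_eq_norm_sq_to_K]
  exact pow_ne_zero 2 (Complex.ofReal_ne_zero.mpr (norm_ne_zero_iff.mpr hx0))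

lemma lub_gt_one {t : ℕ} {s r : ℝ} {v w : EuclideanSpace ℂ (Fin t)} {lam : ℝ}
    (hs : 0 < s) (hlub : IsLUB (rayleighSet t s r v w) lam)
    (hw : w ≠ 0) (hnv : ∀ c : ℂ, v ≠ c • w) : 1 < lam := by
  obtain ⟨x, hx0, hwx, hvx⟩ := exists_perp v w hw hnv
  have hxn : (0:ℝ) < ‖x‖^2 := by
    have : ‖x‖ ≠ 0 := norm_ne_zero_iff.mpr hx0
    positivity
  have hmem : (‖x‖^2 + s*‖⟪v,x⟫_ℂ‖^2)/(‖x‖^2 + r*‖⟪w,x⟫_ℂ‖^2) ∈ rayleighSet t s r v w :=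
    ⟨x, hx0, rfl⟩
  have hle := hlub.1 hmem
  have hv2 : (0:ℝ) < ‖⟪v,x⟫_ℂ‖^2 := by
    have : ‖⟪v,x⟫_ℂ‖ ≠ 0 := norm_ne_zero_iff.mpr hvx
    positivity
  have h1 : 1 < (‖x‖^2 + s*‖⟪v,x⟫_ℂ‖^2)/(‖x‖^2 + r*‖⟪w,x⟫_ℂ‖^2) := by
    rw [hwx]
    simp only [norm_zero, ne_eq]
    rw [one_lt_div (by norm_num; linarith)]
    nlinarith
  linarith

/-- If `h, g ∈ ℂ^t` are linearly independent, `e₁` is a unit-norm generalized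
eigenvector of the pencil `(I + P h h*, I + P g g*)` whose eigenvalue `λ₁` is the
largest generalized eigenvalue, and `γ₂(α)` is the largest generalized eigenvalue
of the pencil `(I + ((1−α)P/(1+αP|g*e₁|²)) g g*, I + ((1−α)P/(1+αP|h*e₁|²)) h h*)`,
then for every `α ∈ (0,1)` both `γ₁(α) > 1` and `γ₂(α) > 1`; hence
`log₂ γ₁(α) > 0` and `log₂ γ₂(α) > 0`: both users can simultaneously achieve
strictly positive secrecy rates. -/
theorem stmt_11 (t : ℕ) (ht : 2 ≤ t) (P : ℝ) (hP : 0 < P)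
    (h g : EuclideanSpace ℂ (Fin t)) (hli : LinearIndependent ℂ ![h, g])
    (e1 : EuclideanSpace ℂ (Fin t)) (lam1 : ℝ)
    (he1 : ‖e1‖ = 1)
    (heig : e1 + ((P : ℂ) * ⟪h, e1⟫_ℂ) • h = (lam1 : ℂ) • (e1 + ((P : ℂ) * ⟪g, e1⟫_ℂ) • g))
    (hlub : IsLUB (rayleighSet t P P h g) lam1)
    (γ2 : ℝ → ℝ)
    (hγ2 : ∀ α ∈ Set.Ioo (0 : ℝ) 1,
      IsLUB (rayleighSet t ((1 - α) * P / (1 + α * P * ‖⟪g, e1⟫_ℂ‖ ^ 2))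
        ((1 - α) * P / (1 + α * P * ‖⟪h, e1⟫_ℂ‖ ^ 2)) g h) (γ2 α)) :
    ∀ α ∈ Set.Ioo (0 : ℝ) 1,
      1 < gamma1 t P h g e1 α ∧ 1 < γ2 α ∧
      0 < Real.logb 2 (gamma1 t P h g e1 α) ∧ 0 < Real.logb 2 (γ2 α) := by
  have hpair := LinearIndependent.pair_iff.mp hli
  have hne1 : ∀ c : ℂ, h ≠ c • g := by
    intro c hc
    have := hpair 1 (-c) (by rw [hc]; module)
    simpa using this.1
  have hne2 : ∀ c : ℂ, g ≠ c • h := by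
    intro c hc
    have := hpair (-c) 1 (by rw [hc]; module)
    simpa using this.2
  have hh0 : h ≠ 0 := by
    intro hc
    have := hpair 1 0 (by rw [hc]; module)
    simpa using this.1
  have hg0 : g ≠ 0 := by
    intro hc
    have := hpair 0 1 (by rw [hc]; module)
    simpa using this.2
  have hlam : 1 < lam1 := lub_gt_one hP hlub hg0 hne1
  have key : 1 + P * ‖⟪h, e1⟫_ℂ‖^2 = lam1 * (1 + P * ‖⟪g, e1⟫_ℂ‖^2) := by
    have h1 := congrArg (fun y => ⟪e1, y⟫_ℂ) heig
    simp only [inner_add_right, inner_smul_right, inner_self_eq_norm_sq_to_K, he1] at h1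
    push_cast at h1
    have hmh : ⟪h, e1⟫_ℂ * ⟪e1, h⟫_ℂ = ((‖⟪h, e1⟫_ℂ‖^2 : ℝ) : ℂ) := by
      rw [← inner_conj_symm e1 h, Complex.mul_conj]
      simp [Complex.normSq_eq_norm_sq]
    have hmg : ⟪g, e1⟫_ℂ * ⟪e1, g⟫_ℂ = ((‖⟪g, e1⟫_ℂ‖^2 : ℝ) : ℂ) := by
      rw [← inner_conj_symm e1 g, Complex.mul_conj]
      simp [Complex.normSq_eq_norm_sq]
    have h2 : ((1:ℂ)) + (P:ℂ) * ((‖⟪h, e1⟫_ℂ‖^2 : ℝ) : ℂ)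
        = (lam1:ℂ) * (1 + (P:ℂ) * ((‖⟪g, e1⟫_ℂ‖^2 : ℝ) : ℂ)) := by
      rw [← hmh, ← hmg]
      linear_combination h1
    exact_mod_cast h2
  have hb0 : (0:ℝ) ≤ ‖⟪g, e1⟫_ℂ‖^2 := by positivity
  have hab : ‖⟪g, e1⟫_ℂ‖^2 < ‖⟪h, e1⟫_ℂ‖^2 := by
    have hp : (0:ℝ) < 1 + P * ‖⟪g, e1⟫_ℂ‖^2 := by positivity
    nlinarith [mul_pos (sub_pos.mpr hlam) hp]
  intro α hα
  obtain ⟨hα0, hα1⟩ := hα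
  have hden : (0:ℝ) < 1 + α * P * ‖⟪g, e1⟫_ℂ‖^2 := by positivity
  have hγ1 : 1 < gamma1 t P h g e1 α := by
    rw [gamma1, one_lt_div hden]
    nlinarith [mul_pos (mul_pos hα0 hP) (sub_pos.mpr hab)]
  have hs : 0 < (1 - α) * P / (1 + α * P * ‖⟪g, e1⟫_ℂ‖^2) := by
    apply div_pos _ hden
    apply mul_pos (by linarith) hP
  have hγ2' : 1 < γ2 α := lub_gt_one hs (hγ2 α ⟨hα0, hα1⟩) hh0 hne2
  exact ⟨hγ1, hγ2', Real.logb_pos (by norm_num) hγ1, Real.logb_pos (by norm_num) hγ2'⟩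
end
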